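/- arXiv:2403.17930 — 3 statements merged into one kernel-verified Lean document; each statement's English description precedes it below -/
import Mathlib

section
/- If λ ≥ ω is a regular cardinal, P is an atomless λ-closed preorder, and p ∈ P, then there is an antichain of size λ contained in the set of elements below p. -/
open Cardinal

/-- `p` and `q` are incompatible in a preorder: no common lower bound. -/
def Incomp {P : Type*} [Preorder P] (p q : P) : Prop := ¬ ∃ r, r ≤ p ∧ r ≤ q

/-- A preorder is `λ`-closed if every decreasing sequence of length `< λ`
has a lower bound. -/
def LambdaClosed (P : Type*) [Preorder P] (lam : Cardinal) : Prop :=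
  ∀ γ : Ordinal, γ < lam.ord →
    ∀ f : {α : Ordinal // α < γ} → P,
      (∀ a b : {α : Ordinal // α < γ}, (a : Ordinal) < b → f b ≤ f a) →
      ∃ q : P, ∀ a, q ≤ f a

/-- A preorder is atomless: below every element there are two incompatible elements. -/
def AtomlessOrder (P : Type*) [Preorder P] : Prop :=
  ∀ p : P, ∃ q, q ≤ p ∧ ∃ r, r ≤ p ∧ Incomp q r

section Aux

variable {P : Type*} [Preorder P]

/-- The condition used in the recursive construction at step `α`:
there is a pair `z` with both components below all previous first components,
both below `p`, and the two components incompatible. -/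
def Stmt2Cond (p : P) (g : Ordinal → P × P) (α : Ordinal) : Prop :=
  ∃ z : P × P, (∀ β, β < α → z.1 ≤ (g β).1 ∧ z.2 ≤ (g β).1) ∧
    z.1 ≤ p ∧ z.2 ≤ p ∧ Incomp z.1 z.2

open scoped Classical in
noncomputable def stmt2Seq (p : P) : Ordinal → P × P :=
  Ordinal.lt_wf.fix (fun α ih =>
    if h : ∃ z : P × P, (∀ β, ∀ hβ : β < α, z.1 ≤ (ih β hβ).1 ∧ z.2 ≤ (ih β hβ).1) ∧
        z.1 ≤ p ∧ z.2 ≤ p ∧ Incomp z.1 z.2 then h.choose else (p, p))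

open scoped Classical in
theorem stmt2Seq_eq (p : P) (α : Ordinal) :
    stmt2Seq p α = if h : Stmt2Cond p (stmt2Seq p) α then h.choose else (p, p) := by
  rw [stmt2Seq, WellFounded.fix_eq]
  rfl

theorem incomp_symm {p q : P} (h : Incomp p q) : Incomp q p := by
  rintro ⟨r, h1, h2⟩; exact h ⟨r, h2, h1⟩

theorem stmt2_key (lam : Cardinal) (hclosed : LambdaClosed P lam)
    (hatomless : AtomlessOrder P) (p : P) :
    ∀ α : Ordinal, α < lam.ord → Stmt2Cond p (stmt2Seq p) α := by
  intro α
  induction α using Ordinal.induction with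
  | h α IH =>
    intro hα
    -- all previous values are given by `choose`
    have heq : ∀ β, β < α → ∃ h : Stmt2Cond p (stmt2Seq p) β, stmt2Seq p β = h.choose := by
      intro β hβ
      have h := IH β hβ (hβ.trans hα)
      exact ⟨h, by rw [stmt2Seq_eq, dif_pos h]⟩
    -- get a lower bound `b ≤ p` of all previous first components
    have hb : ∃ b : P, b ≤ p ∧ ∀ β, β < α → b ≤ (stmt2Seq p β).1 := by
      rcases eq_zero_or_pos α with h0 | h0
      · exact ⟨p, le_refl p, fun β hβ => absurd hβ (by simp [h0])⟩
      · obtain ⟨b, hball⟩ := hclosed α hα (fun a => (stmt2Seq p a.1).1)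
          (by
            rintro ⟨a, ha⟩ ⟨c, hc⟩ hac
            obtain ⟨hcc, hceq⟩ := heq c hc
            show (stmt2Seq p c).1 ≤ (stmt2Seq p a).1
            rw [hceq]
            exact (hcc.choose_spec.1 a hac).1)
        refine ⟨b, ?_, fun β hβ => hball ⟨β, hβ⟩⟩
        have h0' := hball ⟨0, h0⟩
        obtain ⟨h00, h0eq⟩ := heq 0 h0
        refine h0'.trans ?_
        rw [h0eq]
        exact h00.choose_spec.2.1
    obtain ⟨b, hbp, hblt⟩ := hb
    obtain ⟨x, hx, y, hy, hxy⟩ := hatomless b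
    exact ⟨(x, y), fun β hβ => ⟨hx.trans (hblt β hβ), hy.trans (hblt β hβ)⟩,
      hx.trans hbp, hy.trans hbp, hxy⟩

end Aux

/-- If `λ ≥ ω` is regular, `P` is an atomless `λ`-closed preorder and `p ∈ P`, then
there is an antichain of size `λ` below `p`. -/
theorem stmt2 {P : Type*} [Preorder P] (lam : Cardinal)
    (hreg : lam.IsRegular) (hclosed : LambdaClosed P lam)
    (hatomless : AtomlessOrder P) (p : P) :
    ∃ A : Set P, (∀ q ∈ A, q ≤ p) ∧ A.Pairwise Incomp ∧ #A = lam := by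
  classical
  set g := stmt2Seq (P := P) p with hg
  have key := stmt2_key lam hclosed hatomless p
  have heq : ∀ α, α < lam.ord → ∃ h : Stmt2Cond p g α, g α = h.choose := by
    intro α hα
    have h2 := stmt2Seq_eq p α
    rw [dif_pos (key α hα)] at h2
    exact ⟨key α hα, h2⟩
  -- basic properties
  have ha_le_p : ∀ α, α < lam.ord → (g α).2 ≤ p := by
    intro α hα; obtain ⟨h, e⟩ := heq α hα; rw [e]; exact h.choose_spec.2.2.1
  have hincomp : ∀ α, α < lam.ord → Incomp (g α).1 (g α).2 := by
    intro α hα; obtain ⟨h, e⟩ := heq α hα; rw [e]; exact h.choose_spec.2.2.2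
  have ha_le_q : ∀ α β, β < α → α < lam.ord → (g α).2 ≤ (g β).1 := by
    intro α β hβ hα; obtain ⟨h, e⟩ := heq α hα; rw [e]; exact (h.choose_spec.1 β hβ).2
  -- incompatibility across indices
  have hmain : ∀ α β, α < β → β < lam.ord → Incomp (g α).2 (g β).2 := by
    intro α β hab hβ
    rintro ⟨r, hr1, hr2⟩
    exact hincomp α (hab.trans hβ) ⟨r, hr2.trans (ha_le_q β α hab hβ), hr1⟩
  have hinj : Set.InjOn (fun α => (g α).2) (Set.Iio lam.ord) := by
    intro α hα β hβ hE
    by_contra hne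
    have hE' : (g α).2 = (g β).2 := hE
    rcases lt_or_gt_of_ne hne with h | h
    · exact hmain α β h hβ ⟨(g α).2, le_refl _, hE'.le⟩
    · exact hmain β α h hα ⟨(g β).2, le_refl _, hE'.ge⟩
  refine ⟨(fun α => (g α).2) '' Set.Iio lam.ord, ?_, ?_, ?_⟩
  · rintro q ⟨α, hα, rfl⟩
    exact ha_le_p α hα
  · rintro x ⟨α, hα, rfl⟩ y ⟨β, hβ, rfl⟩ hne
    have hne' : α ≠ β := fun h => hne (by rw [h])
    rcases lt_or_gt_of_ne hne' with h | h
    · exact hmain α β h hβ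
    · exact incomp_symm (hmain β α h hα)
  · have h1 := Cardinal.mk_image_eq_of_injOn_lift _ _ hinj
    rw [Ordinal.mk_Iio_ordinal, Cardinal.lift_lift, Cardinal.card_ord] at h1
    exact Cardinal.lift_injective h1
end

section
/- Let λ ≥ ω and κ ≥ 2 be cardinals with κ·λ > ω, let s be a bottom element added below the reversed tree ^{<λ}κ, and define Q to be the set of sequences φ ∈ ({s} ∪ ^{<λ}κ)^ω whose support supp(φ) = {i : φ_i ≠ s} is infinite, preordered by φ ≤ η iff for all but finitely many i ∈ supp(φ), i ∈ supp(η) and φ_i ⊇ η_i. Then Q is σ-closed: every decreasing ω-sequence in Q has a lower bound in Q. -/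
open Cardinal

universe u

/-- An element of the reversed tree `^{<λ}κ`: a function from an ordinal `α < λ`
into (a set of size) `κ`. -/
structure TreeSeq (lam kap : Cardinal.{u}) : Type (u + 1) where
  dom : Ordinal.{u}
  hdom : dom < lam.ord
  fn : ∀ β : Ordinal.{u}, β < dom → kap.out

/-- `Ext φ ψ` means `φ ⊇ ψ`, i.e. `φ` extends `ψ` as a function. -/
def TreeSeq.Ext {lam kap : Cardinal.{u}} (φ ψ : TreeSeq lam kap) : Prop :=
  ∃ h : ψ.dom ≤ φ.dom, ∀ β (hb : β < ψ.dom), φ.fn β (hb.trans_le h) = ψ.fn β hb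

/-- The support of a sequence in `({s} ∪ ^{<λ}κ)^ω`, where `none` plays the role of
the bottom element `s`. -/
def suppQ {lam kap : Cardinal.{u}} (φ : ℕ → Option (TreeSeq lam kap)) : Set ℕ :=
  {i | φ i ≠ none}

/-- The preorder of the set `Q`: `φ ≤ η` iff for all but finitely many
`i ∈ supp(φ)`, `i ∈ supp(η)` and `φ_i ⊇ η_i`. -/
def QLE {lam kap : Cardinal.{u}} (φ η : ℕ → Option (TreeSeq lam kap)) : Prop :=
  ∃ j : ℕ, ∀ i ≥ j, ∀ a : TreeSeq lam kap, φ i = some a →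
    ∃ b : TreeSeq lam kap, η i = some b ∧ a.Ext b

/-- The underlying set of `Q`: sequences in `({s} ∪ ^{<λ}κ)^ω` with infinite support. -/
def QSet (lam kap : Cardinal.{u}) :=
  {φ : ℕ → Option (TreeSeq lam kap) // (suppQ φ).Infinite}

/-- For cardinals `λ ≥ ω`, `κ ≥ 2` with `κ·λ > ω`, the preorder `Q` is σ-closed:
every decreasing ω-sequence in `Q` has a lower bound in `Q`. -/
theorem stmt9 (l k : Cardinal.{u}) (hl : ℵ₀ ≤ l) (hk : 2 ≤ k) (hkl : ℵ₀ < k * l)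
    (f : ℕ → QSet l k) (hdec : ∀ n : ℕ, QLE (f (n + 1)).1 (f n).1) :
    ∃ ψ : QSet l k, ∀ n : ℕ, QLE ψ.1 (f n).1 := by
  classical
  have extTrans : ∀ (a b c : TreeSeq l k), a.Ext b → b.Ext c → a.Ext c := by
    rintro a b c ⟨h1, e1⟩ ⟨h2, e2⟩
    exact ⟨h2.trans h1, fun β hb => (e1 β (hb.trans_le h2)).trans (e2 β hb)⟩
  have qTrans : ∀ (φ η θ : ℕ → Option (TreeSeq l k)), QLE φ η → QLE η θ → QLE φ θ := by
    rintro φ η θ ⟨j1, H1⟩ ⟨j2, H2⟩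
    refine ⟨max j1 j2, fun i hi a ha => ?_⟩
    obtain ⟨b, hb, hab⟩ := H1 i (le_trans (le_max_left _ _) hi) a ha
    obtain ⟨c, hc, hbc⟩ := H2 i (le_trans (le_max_right _ _) hi) b hb
    exact ⟨c, hc, extTrans a b c hab hbc⟩
  have qRefl : ∀ (φ : ℕ → Option (TreeSeq l k)), QLE φ φ := fun φ =>
    ⟨0, fun i _ a ha => ⟨a, ha, le_refl _, fun β hb => rfl⟩⟩
  have chain : ∀ n m, m ≤ n → QLE (f n).1 (f m).1 := by
    intro n
    induction n with
    | zero => intro m hm; rw [Nat.le_zero.mp hm]; exact qRefl _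
    | succ n ih =>
      intro m hm
      rcases Nat.lt_or_ge m (n + 1) with h | h
      · exact qTrans _ _ _ (hdec n) (ih m (Nat.lt_succ_iff.mp h))
      · rw [le_antisymm hm h]; exact qRefl _
  choose jfun jspec using chain
  set B : ℕ → ℕ := fun n =>
    (Finset.range (n + 1)).sup (fun m => if h : m ≤ n then jfun n m h else 0) with hBdef
  have hBle : ∀ n m (h : m ≤ n), jfun n m h ≤ B n := by
    intro n m h
    have := Finset.le_sup (f := fun m => if h : m ≤ n then jfun n m h else 0)
      (Finset.mem_range.mpr (Nat.lt_succ_of_le h))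
    simpa [h] using this
  have key : ∀ n (p : ℕ), ∃ i, i ∈ suppQ (f n).1 ∧ p < i ∧ B n ≤ i := by
    intro n p
    obtain ⟨i, hi, hgt⟩ := (f n).2.exists_gt (max p (B n))
    exact ⟨i, hi, lt_of_le_of_lt (le_max_left _ _) hgt,
      le_of_lt (lt_of_le_of_lt (le_max_right _ _) hgt)⟩
  let I : ℕ → ℕ := fun n =>
    Nat.rec (Classical.choose (key 0 0)) (fun n ih => Classical.choose (key (n + 1) ih)) n
  have I0 : I 0 ∈ suppQ (f 0).1 ∧ 0 < I 0 ∧ B 0 ≤ I 0 := Classical.choose_spec (key 0 0)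
  have IS : ∀ n, I (n + 1) ∈ suppQ (f (n + 1)).1 ∧ I n < I (n + 1) ∧ B (n + 1) ≤ I (n + 1) :=
    fun n => Classical.choose_spec (key (n + 1) (I n))
  have Isupp : ∀ n, I n ∈ suppQ (f n).1 := fun n => Nat.casesOn n I0.1 (fun m => (IS m).1)
  have IB : ∀ n, B n ≤ I n := fun n => Nat.casesOn n I0.2.2 (fun m => (IS m).2.2)
  have Imono : StrictMono I := strictMono_nat_of_lt_succ (fun n => (IS n).2.1)
  let Ψ : ℕ → Option (TreeSeq l k) := fun i =>
    @dite _ (∃ n, I n = i) (Classical.propDecidable _) (fun h => (f h.choose).1 i)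
      (fun _ => none)
  have hΨ : ∀ n, Ψ (I n) = (f n).1 (I n) := by
    intro n
    have h : ∃ m, I m = I n := ⟨n, rfl⟩
    have hn : h.choose = n := Imono.injective h.choose_spec
    show @dite _ _ (Classical.propDecidable _) _ _ = _
    rw [dif_pos h, hn]
  have hinf : (suppQ Ψ).Infinite := by
    apply Set.infinite_of_injective_forall_mem (f := I) Imono.injective
    intro n
    show Ψ (I n) ≠ none
    rw [hΨ n]
    exact Isupp n
  refine ⟨⟨Ψ, hinf⟩, fun m => ⟨I m, fun i hi a ha => ?_⟩⟩
  have ha' : Ψ i = some a := ha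
  have hex : ∃ n, I n = i := by
    by_contra hne
    have hnone : Ψ i = none := @dif_neg _ (Classical.propDecidable _) hne _ _ _
    rw [hnone] at ha'
    exact Option.some_ne_none a ha'.symm
  obtain ⟨n, hIn⟩ := hex
  subst hIn
  have hmn : m ≤ n := Imono.le_iff_le.mp hi
  rw [hΨ n] at ha'
  exact jspec n m hmn (I n) (le_trans (hBle n m hmn) (IB n)) a ha'
end

section
/- For every singular cardinal κ there is a family 𝒜 of subsets of κ, each of size cf(κ), with |𝒜| = κ⁺, such that any two distinct members of 𝒜 have intersection of size < cf(κ). -/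
open Cardinal Ordinal Set

universe u

theorem stmt17_chain {X : Type u} (κ : Cardinal.{u}) (P : X → X → Prop)
    (hstep : ∀ S : Set X, #S ≤ κ → ∃ f, ∀ g ∈ S, P f g) :
    ∃ F : (Order.succ κ).ord.ToType → X,
      ∀ a b : (Order.succ κ).ord.ToType, a < b → P (F b) (F a) := by
  haveI : IsWellOrder (Order.succ κ).ord.ToType (· < ·) := isWellOrder_lt
  have key : ∀ (b : (Order.succ κ).ord.ToType) (IH : ∀ a, a < b → X),
      ∃ f, ∀ g ∈ {g | ∃ a, ∃ h : a < b, IH a h = g}, P f g := by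
    intro b IH
    apply hstep
    have he : {g | ∃ a, ∃ h : a < b, IH a h = g}
        = Set.range (fun p : {a // a < b} => IH p.1 p.2) := by
      ext g
      constructor
      · rintro ⟨a, h, rfl⟩; exact ⟨⟨a, h⟩, rfl⟩
      · rintro ⟨⟨a, h⟩, rfl⟩; exact ⟨a, h, rfl⟩
    rw [he]
    refine Order.lt_succ_iff.mp ?_
    calc #(Set.range fun p : {a // a < b} => IH p.1 p.2) ≤ #{a // a < b} := mk_range_le
      _ = #(Set.Iio b) := rfl
      _ < Order.succ κ := mk_Iio_ord_toType b
  let F : (Order.succ κ).ord.ToType → X :=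
    IsWellFounded.fix (· < ·) (fun b IH => (key b IH).choose)
  have hF : ∀ b : (Order.succ κ).ord.ToType, F b = (key b (fun a _ => F a)).choose := fun b =>
    IsWellFounded.fix_eq _ _ b
  refine ⟨F, fun a b hab => ?_⟩
  have hspec := (key b (fun a _ => F a)).choose_spec
  have hmem : F a ∈ {g | ∃ a', ∃ h : a' < b, F a' = g} := ⟨a, hab, rfl⟩
  have := hspec _ hmem
  rw [hF b]
  exact this

theorem stmt17_cof (κ : Cardinal.{u}) (hκ : ℵ₀ ≤ κ) :
    ∃ c : κ.ord.cof.ord.ToType → Ordinal.{u},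
      (∀ i, c i < κ.ord) ∧ (∀ β < κ.ord, #{i | c i ≤ β} < κ.ord.cof) := by
  haveI : IsWellOrder κ.ord.cof.ord.ToType (· < ·) := isWellOrder_lt
  obtain ⟨f, hf⟩ := Ordinal.exists_fundamental_sequence κ.ord
  have fcongr : ∀ (x y : Ordinal) (hx : x < κ.ord.cof.ord) (hy : y < κ.ord.cof.ord),
      x = y → f x hx = f y hy := by rintro x y hx hy rfl; rfl
  refine ⟨fun i => f (typein (· < ·) i) (typein_lt_self i), fun i => hf.lt _, ?_⟩
  intro β hβ
  have hβ' : β < blsub.{u,u} κ.ord.cof.ord f := by rw [hf.blsub_eq]; exact hβ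
  rw [lt_blsub_iff] at hβ'
  obtain ⟨p, hp, hpβ⟩ := hβ'
  have hlim : Order.IsSuccLimit (κ.ord.cof.ord) :=
    Cardinal.isSuccLimit_ord (aleph0_le_cof.2 (Cardinal.isSuccLimit_ord hκ))
  have hsp : Order.succ p < κ.ord.cof.ord := hlim.succ_lt hp
  obtain ⟨i₀, hi₀⟩ := typein_surj (α := κ.ord.cof.ord.ToType) (· < ·)
    (by rw [type_toType]; exact hsp)
  have hβi₀ : β < f (typein (· < ·) i₀) (typein_lt_self i₀) := by
    refine lt_of_le_of_lt hpβ ?_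
    calc f p hp < f (Order.succ p) hsp := hf.2.1 hp hsp (Order.lt_succ p)
      _ = f (typein (· < ·) i₀) (typein_lt_self i₀) := fcongr _ _ _ _ hi₀.symm
  have hsub : {i | f (typein (· < ·) i) (typein_lt_self i) ≤ β} ⊆ Set.Iio i₀ := by
    intro i hi
    by_contra hc
    have h : i₀ ≤ i := not_lt.mp (fun hlt => hc hlt)
    have hmono : f (typein (· < ·) i₀) (typein_lt_self i₀)
        ≤ f (typein (· < ·) i) (typein_lt_self i) :=
      hf.monotone _ _ ((typein_le_typein' _).2 h)
    exact absurd (hβi₀.trans_le (hmono.trans hi)) (lt_irrefl β)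
  exact lt_of_le_of_lt (mk_le_mk_of_subset hsub) (mk_Iio_ord_toType i₀)

theorem stmt17_diag (κ : Cardinal.{u}) (hκ : ℵ₀ ≤ κ)
    (S : Set (κ.ord.cof.ord.ToType → κ.out)) (hS : #S ≤ κ) :
    ∃ f : κ.ord.cof.ord.ToType → κ.out, ∀ g ∈ S, #{i | f i = g i} < κ.ord.cof := by
  classical
  haveI : IsWellOrder κ.ord.cof.ord.ToType (· < ·) := isWellOrder_lt
  haveI : IsWellOrder κ.ord.ToType (· < ·) := isWellOrder_lt
  obtain ⟨c, hclt, hcbd⟩ := stmt17_cof κ hκ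
  have hS' : #S ≤ #κ.ord.ToType := by rw [mk_toType, card_ord]; exact hS
  obtain ⟨j⟩ := Cardinal.le_def _ _ |>.1 hS'
  let B : κ.ord.cof.ord.ToType → Set κ.out := fun i =>
    {x | ∃ g : S, typein (· < ·) (j g) < c i ∧ (g : κ.ord.cof.ord.ToType → κ.out) i = x}
  have hB : ∀ i, ∃ x, x ∉ B i := by
    intro i
    rw [← Set.ne_univ_iff_exists_notMem]
    intro h
    obtain ⟨v₀, hv₀⟩ := typein_surj (α := κ.ord.ToType) (· < ·)
      (by rw [type_toType]; exact hclt i)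
    have h1 : #(B i) ≤ #(Set.Iio v₀) := by
      have he : B i = Set.range
          (fun p : {g : S // typein (· < ·) (j g) < c i} =>
            (p.1 : κ.ord.cof.ord.ToType → κ.out) i) := by
        ext x
        constructor
        · rintro ⟨g, hg, rfl⟩; exact ⟨⟨g, hg⟩, rfl⟩
        · rintro ⟨⟨g, hg⟩, rfl⟩; exact ⟨g, hg, rfl⟩
      rw [he]
      have hinj : Function.Injective
          (fun p : {g : S // typein (· < ·) (j g) < c i} =>
            (⟨j p.1, (typein_lt_typein (α := κ.ord.ToType) (· < ·)).1
              (by rw [hv₀]; exact p.2)⟩ : Set.Iio v₀)) := by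
        intro p q hpq
        exact Subtype.ext (j.injective (congrArg Subtype.val hpq))
      exact le_trans mk_range_le (Cardinal.mk_le_of_injective hinj)
    have h2 : #(B i) < κ := h1.trans_lt (mk_Iio_ord_toType v₀)
    rw [h, mk_univ, mk_out] at h2
    exact lt_irrefl κ h2
  choose f0 hf0 using hB
  refine ⟨f0, fun g hg => ?_⟩
  have hβ : typein (α := κ.ord.ToType) (· < ·) (j ⟨g, hg⟩) < κ.ord := typein_lt_self _
  have hsub : {i | f0 i = g i} ⊆ {i | c i ≤ typein (· < ·) (j ⟨g, hg⟩)} := by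
    intro i hi
    by_contra hcon
    have hlt : typein (α := κ.ord.ToType) (· < ·) (j ⟨g, hg⟩) < c i := not_le.mp hcon
    exact hf0 i ⟨⟨g, hg⟩, hlt, hi.symm⟩
  exact lt_of_le_of_lt (mk_le_mk_of_subset hsub) (hcbd _ hβ)

/-- Baumgartner: for every singular cardinal `κ` there is an almost disjoint family
`𝒜 ⊆ [κ]^{cf κ}` of size `κ⁺` with pairwise intersections of size `< cf κ`. -/
theorem stmt17 (κ : Cardinal) (hκ : ℵ₀ ≤ κ) (hsing : κ.ord.cof < κ) :
    ∃ 𝒜 : Set (Set κ.out),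
      #𝒜 = Order.succ κ ∧
      (∀ A ∈ 𝒜, #A = κ.ord.cof) ∧
      (∀ A ∈ 𝒜, ∀ B ∈ 𝒜, A ≠ B → #(↥(A ∩ B)) < κ.ord.cof) := by
  classical
  obtain ⟨F, hF⟩ := stmt17_chain κ
    (fun f g : κ.ord.cof.ord.ToType → κ.out => #{i | f i = g i} < κ.ord.cof)
    (stmt17_diag κ hκ)
  have hmkι : #(κ.ord.cof.ord.ToType) = κ.ord.cof := by rw [mk_toType, card_ord]
  have hlcω : ℵ₀ ≤ κ.ord.cof := aleph0_le_cof.2 (Cardinal.isSuccLimit_ord hκ)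
  -- F is injective
  have hFinj : Function.Injective F := by
    intro a b hab
    by_contra hne
    rcases Ne.lt_or_gt hne with h | h
    · have h1 := hF a b h
      have h2 : {i | F b i = F a i} = Set.univ := by ext i; simp [hab]
      rw [h2, mk_univ, hmkι] at h1
      exact lt_irrefl _ h1
    · have h1 := hF b a h
      have h2 : {i | F a i = F b i} = Set.univ := by ext i; simp [hab]
      rw [h2, mk_univ, hmkι] at h1
      exact lt_irrefl _ h1
  -- an equivalence between ι × T and T
  have hmkprod : #(κ.ord.cof.ord.ToType × κ.out) = #(κ.out) := by
    rw [mk_prod, Cardinal.lift_id, Cardinal.lift_id, hmkι, mk_out,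
      Cardinal.mul_eq_max hlcω hκ, max_eq_right hsing.le]
  obtain ⟨E⟩ := Cardinal.eq.1 hmkprod
  -- graphs
  set G : (κ.ord.cof.ord.ToType → κ.out) → Set (κ.ord.cof.ord.ToType × κ.out) :=
    fun f => Set.range (fun i => (i, f i)) with hG
  have hGinj : Function.Injective G := by
    intro f g h
    funext i
    have hmem : (i, f i) ∈ G g := h ▸ ⟨i, rfl⟩
    obtain ⟨i', hi'⟩ := hmem
    have h1 : i' = i := congrArg Prod.fst hi'
    subst h1
    exact (congrArg Prod.snd hi').symm
  have hgraphinj : ∀ f : κ.ord.cof.ord.ToType → κ.out,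
      Function.Injective (fun i => (i, f i) :
        κ.ord.cof.ord.ToType → κ.ord.cof.ord.ToType × κ.out) := by
    intro f i j h
    exact congrArg Prod.fst h
  have hGcard : ∀ f, #(G f) = κ.ord.cof := by
    intro f
    rw [hG]
    rw [mk_range_eq _ (hgraphinj f), hmkι]
  have hGinter : ∀ f g, G f ∩ G g = (fun i => (i, f i)) '' {i | f i = g i} := by
    intro f g
    ext p
    constructor
    · rintro ⟨⟨i, hi⟩, ⟨i', hi'⟩⟩
      subst hi
      have h1 : i' = i := congrArg Prod.fst hi'
      subst h1
      have h2 : g i' = f i' := congrArg Prod.snd hi'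
      exact ⟨i', h2.symm, rfl⟩
    · rintro ⟨i, hi, rfl⟩
      exact ⟨⟨i, rfl⟩, ⟨i, by simp only []; rw [show f i = g i from hi]⟩⟩
  set A : (Order.succ κ).ord.ToType → Set κ.out := fun b => E '' G (F b) with hA
  refine ⟨Set.range A, ?_, ?_, ?_⟩
  · have hAinj : Function.Injective A := by
      intro a b h
      exact hFinj (hGinj (Set.image_injective.2 E.injective h))
    rw [mk_range_eq _ hAinj, mk_toType, card_ord]
  · rintro A' ⟨b, rfl⟩
    rw [hA]
    rw [Cardinal.mk_image_eq E.injective, hGcard]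
  · rintro A' ⟨a, rfl⟩ B' ⟨b, rfl⟩ hne
    have hab : a ≠ b := fun h => hne (by rw [h])
    have hint : A a ∩ A b = E '' (G (F a) ∩ G (F b)) := (Set.image_inter E.injective).symm
    rw [hint, Cardinal.mk_image_eq E.injective, hGinter,
      Cardinal.mk_image_eq (hgraphinj (F a))]
    rcases Ne.lt_or_gt hab with h | h
    · have h1 := hF a b h
      have h2 : {i | F a i = F b i} = {i | F b i = F a i} := by ext i; exact eq_comm
      rw [h2]
      exact h1
    · exact hF b a h
end
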